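/- Let x = (x¹, x²) be a pair of vectors in ℝ³, forming a 3×2 matrix, and let Δ₃ = x₁¹x₂² − x₁²x₂¹, Δ₂ = x₁¹x₃² − x₁²x₃¹, Δ₁ = x₂¹x₃² − x₂²x₃¹ be its three 2×2 minors. Let Φ: ℝ³ → ℝ be C¹, F(x) = Φ(Δ₃, Δ₂, Δ₁), and y the 2×3 matrix of partial derivatives y_k^n = ∂F/∂x_n^k. Then the three 2×2 minors D¹ = y₁²y₂³ − y₂²y₁³, D² = y₁¹y₂³ − y₂¹y₁³, D³ = y₁¹y₂² − y₂¹y₁² of y satisfy Dⁿ = (∂Φ/∂Δ_n) · (Σ_{m=1}^{3} (∂Φ/∂Δ_m) Δ_m) for n = 1, 2, 3. -/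

import Mathlib

attribute [local instance] Matrix.normedAddCommGroup Matrix.normedSpace

/-- The three `2×2` minors `Δ₁, Δ₂, Δ₃` (at indices `0, 1, 2`) of a `3×2` matrix
`x = (x¹, x²)` of two vectors in `ℝ³`. -/
def minors32 (x : Matrix (Fin 3) (Fin 2) ℝ) : Fin 3 → ℝ :=
  ![x 1 0 * x 2 1 - x 1 1 * x 2 0,   -- Δ₁ = x₂¹x₃² − x₂²x₃¹
    x 0 0 * x 2 1 - x 0 1 * x 2 0,   -- Δ₂ = x₁¹x₃² − x₁²x₃¹
    x 0 0 * x 1 1 - x 0 1 * x 1 0]   -- Δ₃ = x₁¹x₂² − x₁²x₂¹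

/-- The continuous linear map sending a `3×2` matrix to its `(i,j)` entry. -/
noncomputable def entryCLM (i : Fin 3) (j : Fin 2) : Matrix (Fin 3) (Fin 2) ℝ →L[ℝ] ℝ :=
  (ContinuousLinearMap.proj j).comp
    (ContinuousLinearMap.proj i : (Matrix (Fin 3) (Fin 2) ℝ) →L[ℝ] (Fin 2 → ℝ))

/-- The derivative of `minors32` at `x`. -/
noncomputable def minorsDeriv (x : Matrix (Fin 3) (Fin 2) ℝ) :
    Matrix (Fin 3) (Fin 2) ℝ →L[ℝ] (Fin 3 → ℝ) :=
  ContinuousLinearMap.pi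
    ![(x 1 0 • entryCLM 2 1 + x 2 1 • entryCLM 1 0)
        - (x 1 1 • entryCLM 2 0 + x 2 0 • entryCLM 1 1),
      (x 0 0 • entryCLM 2 1 + x 2 1 • entryCLM 0 0)
        - (x 0 1 • entryCLM 2 0 + x 2 0 • entryCLM 0 1),
      (x 0 0 • entryCLM 1 1 + x 1 1 • entryCLM 0 0)
        - (x 0 1 • entryCLM 1 0 + x 1 0 • entryCLM 0 1)]

lemma entryCLM_apply (i : Fin 3) (j : Fin 2) (z : Matrix (Fin 3) (Fin 2) ℝ) :
    entryCLM i j z = z i j := rfl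

lemma hasFDerivAt_minors32 (x : Matrix (Fin 3) (Fin 2) ℝ) :
    HasFDerivAt minors32 (minorsDeriv x) x := by
  refine hasFDerivAt_pi'.2 ?_
  intro i
  fin_cases i <;>
  · simp only [minorsDeriv, ContinuousLinearMap.proj_pi, minors32, Matrix.cons_val_zero,
      Matrix.cons_val_one, Matrix.head_cons, Matrix.cons_val_two, Matrix.tail_cons, Fin.isValue]
    exact ((entryCLM _ _).hasFDerivAt.mul (entryCLM _ _).hasFDerivAt).sub
      ((entryCLM _ _).hasFDerivAt.mul (entryCLM _ _).hasFDerivAt)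

/-- For `F(x¹,x²) = Φ(Δ₃,Δ₂,Δ₁)` with `Φ : ℝ³ → ℝ` of class `C¹`, and `y` the `2×3`
matrix of partials `y k n = ∂F/∂x n k`, the three `2×2` minors `Dⁿ` of `y` satisfy
`Dⁿ = (∂Φ/∂Δₙ) · Σₘ (∂Φ/∂Δₘ) Δₘ` for `n = 1,2,3`. -/
theorem minors_of_gradient (Φ : (Fin 3 → ℝ) → ℝ) (hΦ : ContDiff ℝ 1 Φ)
    (x : Matrix (Fin 3) (Fin 2) ℝ)
    (y : Matrix (Fin 2) (Fin 3) ℝ)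
    (hy : ∀ k n, y k n =
      fderiv ℝ (fun z : Matrix (Fin 3) (Fin 2) ℝ => Φ (minors32 z)) x
        (Matrix.single n k 1))
    (g : Fin 3 → ℝ) (hg : ∀ m, g m = fderiv ℝ Φ (minors32 x) (Pi.single m 1))
    (D : Fin 3 → ℝ)
    (hD1 : D 0 = y 0 1 * y 1 2 - y 1 1 * y 0 2)   -- D¹ = y₁²y₂³ − y₂²y₁³
    (hD2 : D 1 = y 0 0 * y 1 2 - y 1 0 * y 0 2)   -- D² = y₁¹y₂³ − y₂¹y₁³
    (hD3 : D 2 = y 0 0 * y 1 1 - y 1 0 * y 0 1) : -- D³ = y₁¹y₂² − y₂¹y₁²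
    ∀ n, D n = g n * ∑ m, g m * minors32 x m := by
  have hΦ' : HasFDerivAt Φ (fderiv ℝ Φ (minors32 x)) (minors32 x) :=
    ((hΦ.differentiable one_ne_zero) (minors32 x)).hasFDerivAt
  have hF : HasFDerivAt (fun z : Matrix (Fin 3) (Fin 2) ℝ => Φ (minors32 z))
      ((fderiv ℝ Φ (minors32 x)).comp (minorsDeriv x)) x :=
    hΦ'.comp x (hasFDerivAt_minors32 x)
  have hval : ∀ v : Fin 3 → ℝ,
      fderiv ℝ Φ (minors32 x) v = g 0 * v 0 + g 1 * v 1 + g 2 * v 2 := by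
    intro v
    have hv : v = v 0 • (Pi.single (0 : Fin 3) (1 : ℝ) : Fin 3 → ℝ)
        + v 1 • (Pi.single (1 : Fin 3) (1 : ℝ) : Fin 3 → ℝ)
        + v 2 • (Pi.single (2 : Fin 3) (1 : ℝ) : Fin 3 → ℝ) := by
      funext i; fin_cases i <;> simp
    rw [hg 0, hg 1, hg 2]
    conv_lhs => rw [hv]
    simp only [map_add, map_smul, smul_eq_mul]
    ring
  have hyv : ∀ k n, y k n =
      fderiv ℝ Φ (minors32 x) (minorsDeriv x (Matrix.single n k 1)) := by
    intro k n
    rw [hy, hF.fderiv]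
    rfl
  have h00 : y 0 0 = g 1 * x 2 1 + g 2 * x 1 1 := by
    rw [hyv, hval]
    norm_num [minorsDeriv, entryCLM_apply, Matrix.single, ContinuousLinearMap.pi_apply,
      ContinuousLinearMap.sub_apply, ContinuousLinearMap.add_apply,
      ContinuousLinearMap.smul_apply, Matrix.of_apply, Fin.isValue,
      Matrix.cons_val_two, Matrix.tail_cons, Matrix.head_cons,
      show ((0:Fin 3) = 2) = False by simp [Fin.ext_iff],
      show ((1:Fin 3) = 2) = False by simp [Fin.ext_iff],
      show ((2:Fin 3) = 0) = False by simp [Fin.ext_iff],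
      show ((2:Fin 3) = 1) = False by simp [Fin.ext_iff]]
  have h10 : y 1 0 = -(g 1 * x 2 0) - g 2 * x 1 0 := by
    rw [hyv, hval]
    norm_num [minorsDeriv, entryCLM_apply, Matrix.single, ContinuousLinearMap.pi_apply,
      ContinuousLinearMap.sub_apply, ContinuousLinearMap.add_apply,
      ContinuousLinearMap.smul_apply, Matrix.of_apply, Fin.isValue,
      Matrix.cons_val_two, Matrix.tail_cons, Matrix.head_cons,
      show ((0:Fin 3) = 2) = False by simp [Fin.ext_iff],
      show ((1:Fin 3) = 2) = False by simp [Fin.ext_iff],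
      show ((2:Fin 3) = 0) = False by simp [Fin.ext_iff],
      show ((2:Fin 3) = 1) = False by simp [Fin.ext_iff]]
    try ring
  have h01 : y 0 1 = g 0 * x 2 1 - g 2 * x 0 1 := by
    rw [hyv, hval]
    norm_num [minorsDeriv, entryCLM_apply, Matrix.single, ContinuousLinearMap.pi_apply,
      ContinuousLinearMap.sub_apply, ContinuousLinearMap.add_apply,
      ContinuousLinearMap.smul_apply, Matrix.of_apply, Fin.isValue,
      Matrix.cons_val_two, Matrix.tail_cons, Matrix.head_cons,
      show ((0:Fin 3) = 2) = False by simp [Fin.ext_iff],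
      show ((1:Fin 3) = 2) = False by simp [Fin.ext_iff],
      show ((2:Fin 3) = 0) = False by simp [Fin.ext_iff],
      show ((2:Fin 3) = 1) = False by simp [Fin.ext_iff]]
    try ring
  have h11 : y 1 1 = -(g 0 * x 2 0) + g 2 * x 0 0 := by
    rw [hyv, hval]
    norm_num [minorsDeriv, entryCLM_apply, Matrix.single, ContinuousLinearMap.pi_apply,
      ContinuousLinearMap.sub_apply, ContinuousLinearMap.add_apply,
      ContinuousLinearMap.smul_apply, Matrix.of_apply, Fin.isValue,
      Matrix.cons_val_two, Matrix.tail_cons, Matrix.head_cons,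
      show ((0:Fin 3) = 2) = False by simp [Fin.ext_iff],
      show ((1:Fin 3) = 2) = False by simp [Fin.ext_iff],
      show ((2:Fin 3) = 0) = False by simp [Fin.ext_iff],
      show ((2:Fin 3) = 1) = False by simp [Fin.ext_iff]]
    try ring
  have h02 : y 0 2 = -(g 0 * x 1 1) - g 1 * x 0 1 := by
    rw [hyv, hval]
    norm_num [minorsDeriv, entryCLM_apply, Matrix.single, ContinuousLinearMap.pi_apply,
      ContinuousLinearMap.sub_apply, ContinuousLinearMap.add_apply,
      ContinuousLinearMap.smul_apply, Matrix.of_apply, Fin.isValue,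
      Matrix.cons_val_two, Matrix.tail_cons, Matrix.head_cons,
      show ((0:Fin 3) = 2) = False by simp [Fin.ext_iff],
      show ((1:Fin 3) = 2) = False by simp [Fin.ext_iff],
      show ((2:Fin 3) = 0) = False by simp [Fin.ext_iff],
      show ((2:Fin 3) = 1) = False by simp [Fin.ext_iff]]
    try ring
  have h12 : y 1 2 = g 0 * x 1 0 + g 1 * x 0 0 := by
    rw [hyv, hval]
    norm_num [minorsDeriv, entryCLM_apply, Matrix.single, ContinuousLinearMap.pi_apply,
      ContinuousLinearMap.sub_apply, ContinuousLinearMap.add_apply,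
      ContinuousLinearMap.smul_apply, Matrix.of_apply, Fin.isValue,
      Matrix.cons_val_two, Matrix.tail_cons, Matrix.head_cons,
      show ((0:Fin 3) = 2) = False by simp [Fin.ext_iff],
      show ((1:Fin 3) = 2) = False by simp [Fin.ext_iff],
      show ((2:Fin 3) = 0) = False by simp [Fin.ext_iff],
      show ((2:Fin 3) = 1) = False by simp [Fin.ext_iff]]
    try ring
  have hsum : (∑ m, g m * minors32 x m) =
      g 0 * (x 1 0 * x 2 1 - x 1 1 * x 2 0) + g 1 * (x 0 0 * x 2 1 - x 0 1 * x 2 0)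
        + g 2 * (x 0 0 * x 1 1 - x 0 1 * x 1 0) := by
    simp [Fin.sum_univ_three, minors32]
  have h0 : D 0 = g 0 * ∑ m, g m * minors32 x m := by
    rw [hD1, h01, h12, h11, h02, hsum]; ring
  have h1 : D 1 = g 1 * ∑ m, g m * minors32 x m := by
    rw [hD2, h00, h12, h10, h02, hsum]; ring
  have h2 : D 2 = g 2 * ∑ m, g m * minors32 x m := by
    rw [hD3, h00, h11, h10, h01, hsum]; ring
  intro n
  fin_cases n
  · exact h0
  · exact h1
  · exact h2
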